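/- Gradient formula for the parameters: with C = (I - U T⁻¹ Uᵀ) h, h̃ = T⁻¹ Uᵀ h, C̃ = (Tᵀ)⁻¹ Uᵀ (∂L/∂C), and B = striu(J) + (1/2)I where J is the m×m all-ones matrix, the gradient of L with respect to U (holding h fixed) equals U[(h̃ C̃ᵀ) ∘ Bᵀ + (C̃ h̃ᵀ) ∘ B] - (∂L/∂C) h̃ᵀ - h C̃ᵀ, where ∘ denotes the Hadamard (entrywise) product. -/

import Mathlib

open Matrix


/-- `striu A + (1/2) diag A`: strictly upper triangular part plus half the diagonal. -/
noncomputable def wyT {m : ℕ} (A : Matrix (Fin m) (Fin m) ℝ) : Matrix (Fin m) (Fin m) ℝ :=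
  Matrix.of fun i j => if (i : ℕ) < (j : ℕ) then A i j else if i = j then A i i / 2 else 0

/-- `B = striu(J_m) + (1/2) I_m` where `J_m` is the all-ones matrix. -/
noncomputable def wyB (m : ℕ) : Matrix (Fin m) (Fin m) ℝ :=
  Matrix.of fun i j => if (i : ℕ) < (j : ℕ) then 1 else if i = j then (1 : ℝ) / 2 else 0

attribute [local instance] Matrix.linftyOpNormedRing Matrix.linftyOpNormedAlgebra

lemma wyT_eq_hadamard {m : ℕ} (A : Matrix (Fin m) (Fin m) ℝ) :
    wyT A = Matrix.hadamard A (wyB m) := by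
  ext i j
  simp only [wyT, wyB, Matrix.hadamard_apply, Matrix.of_apply]
  split_ifs with h1 h2
  · ring
  · subst h2; ring
  · ring

noncomputable def entryCLM {a b : ℕ} (i : Fin a) (j : Fin b) :
    Matrix (Fin a) (Fin b) ℝ →L[ℝ] ℝ :=
  LinearMap.toContinuousLinearMap
    { toFun := fun M => M i j
      map_add' := fun _ _ => rfl
      map_smul' := fun _ _ => rfl }

lemma hasDerivAt_matrix {m : ℕ} {f : ℝ → Matrix (Fin m) (Fin m) ℝ}
    {f' : Matrix (Fin m) (Fin m) ℝ} {x : ℝ}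
    (hf : ∀ i j, HasDerivAt (fun t => f t i j) (f' i j) x) :
    HasDerivAt f f' x := by
  have h1 : f = fun t => ∑ i : Fin m, ∑ j : Fin m, (f t i j) • Matrix.single i j (1:ℝ) := by
    funext t
    conv_lhs => rw [matrix_eq_sum_single (f t)]
    simp [smul_single]
  have h2 : f' = ∑ i : Fin m, ∑ j : Fin m, (f' i j) • Matrix.single i j (1:ℝ) := by
    conv_lhs => rw [matrix_eq_sum_single f']
    simp [smul_single]
  rw [h1, h2]
  exact HasDerivAt.fun_sum fun i _ => HasDerivAt.fun_sum fun j _ => (hf i j).smul_const _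

lemma HasDerivAt.matrix_entry {m : ℕ} {f : ℝ → Matrix (Fin m) (Fin m) ℝ}
    {f' : Matrix (Fin m) (Fin m) ℝ} {x : ℝ} (hf : HasDerivAt f f' x) (i j : Fin m) :
    HasDerivAt (fun t => f t i j) (f' i j) x :=
  (entryCLM i j).hasFDerivAt.comp_hasDerivAt x hf

lemma hasDerivAt_euclidean {n : ℕ} {f : ℝ → EuclideanSpace ℝ (Fin n)}
    {f' : EuclideanSpace ℝ (Fin n)} {x : ℝ}
    (hf : ∀ i, HasDerivAt (fun t => f t i) (f' i) x) :
    HasDerivAt f f' x := by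
  have h1 : f = fun t => ∑ i, (f t i) • EuclideanSpace.single i (1:ℝ) := by
    funext t
    apply PiLp.ext; intro i
    rw [show ∀ (v : Fin n → EuclideanSpace ℝ (Fin n)), (∑ x, v x) i = ∑ x, v x i from
      fun v => by rw [WithLp.ofLp_sum, Finset.sum_apply]]
    simp [PiLp.smul_apply, smul_eq_mul, EuclideanSpace.single_apply]
  have h2 : f' = ∑ i, (f' i) • EuclideanSpace.single i (1:ℝ) := by
    apply PiLp.ext; intro i
    rw [show ∀ (v : Fin n → EuclideanSpace ℝ (Fin n)), (∑ x, v x) i = ∑ x, v x i from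
      fun v => by rw [WithLp.ofLp_sum, Finset.sum_apply]]
    simp [PiLp.smul_apply, smul_eq_mul, EuclideanSpace.single_apply]
  rw [h1, h2]
  exact HasDerivAt.fun_sum fun i _ => (hf i).smul_const _

lemma sum_rot {n m : ℕ} (f : Fin m → Fin m → Fin n → ℝ) :
    ∑ i, ∑ j, ∑ k, f i j k = ∑ k, ∑ i, ∑ j, f i j k :=
  (Finset.sum_congr rfl fun i _ => Finset.sum_comm).trans (Finset.sum_comm)

lemma core {n m : ℕ} (U V : Matrix (Fin n) (Fin m) ℝ) (Bm : Matrix (Fin m) (Fin m) ℝ)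
    (ht Ct : Fin m → ℝ) :
    Ct ⬝ᵥ (Matrix.hadamard (Vᵀ*U + Uᵀ*V) Bm).mulVec ht =
      ∑ k, ∑ l, (U * (Matrix.hadamard (vecMulVec ht Ct) Bmᵀ +
        Matrix.hadamard (vecMulVec Ct ht) Bm)) k l * V k l := by
  have lhs_eq : Ct ⬝ᵥ (Matrix.hadamard (Vᵀ*U + Uᵀ*V) Bm).mulVec ht
      = (∑ i, ∑ j, ∑ k, Ct i * Bm i j * ht j * (V k i * U k j))
        + (∑ i, ∑ j, ∑ k, Ct i * Bm i j * ht j * (U k i * V k j)) := by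
    simp only [dotProduct, Matrix.mulVec, Matrix.hadamard_apply, Matrix.add_apply,
      Matrix.mul_apply, Matrix.transpose_apply, Finset.mul_sum, Finset.sum_mul, add_mul, mul_add,
      Finset.sum_add_distrib]
    congr 1 <;> refine Finset.sum_congr rfl fun i _ => Finset.sum_congr rfl fun j _ =>
      Finset.sum_congr rfl fun k _ => by ring
  have rhs_eq : ∑ k, ∑ l, (U * (Matrix.hadamard (vecMulVec ht Ct) Bmᵀ +
        Matrix.hadamard (vecMulVec Ct ht) Bm)) k l * V k l
      = (∑ k, ∑ l, ∑ j, Ct l * Bm l j * ht j * (V k l * U k j))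
        + (∑ k, ∑ l, ∑ j, Ct j * Bm j l * ht l * (U k j * V k l)) := by
    simp only [Matrix.mul_apply, Matrix.add_apply, Matrix.hadamard_apply, vecMulVec_apply,
      Matrix.transpose_apply, Finset.sum_mul, add_mul, mul_add, Finset.sum_add_distrib]
    congr 1 <;> refine Finset.sum_congr rfl fun i _ => Finset.sum_congr rfl fun j _ =>
      Finset.sum_congr rfl fun k _ => by ring
  rw [lhs_eq, rhs_eq]
  congr 1
  · rw [sum_rot]
  · rw [sum_rot]
    exact Finset.sum_congr rfl fun k _ => Finset.sum_comm

lemma dot_swap {n m : ℕ} (v : Fin n → ℝ) (A : Matrix (Fin n) (Fin m) ℝ) (w : Fin m → ℝ) :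
    v ⬝ᵥ A.mulVec w = w ⬝ᵥ Aᵀ.mulVec v := by
  rw [Matrix.dotProduct_mulVec, dotProduct_comm, Matrix.mulVec_transpose]

lemma keyalg {n m : ℕ} (U V : Matrix (Fin n) (Fin m) ℝ) (S Bm : Matrix (Fin m) (Fin m) ℝ)
    (g h : Fin n → ℝ) :
    (∑ i, g i * (-∑ j, (V i j * (S.mulVec (Uᵀ.mulVec h)) j +
        U i j * (((-(S * (Matrix.hadamard (Vᵀ*U + Uᵀ*V) Bm) * S)).mulVec (Uᵀ.mulVec h) +
          S.mulVec (Vᵀ.mulVec h)) j)))) =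
      ∑ i, ∑ j, ((U * (Matrix.hadamard (vecMulVec (S.mulVec (Uᵀ.mulVec h)) (Sᵀ.mulVec (Uᵀ.mulVec g))) Bmᵀ +
          Matrix.hadamard (vecMulVec (Sᵀ.mulVec (Uᵀ.mulVec g)) (S.mulVec (Uᵀ.mulVec h))) Bm) -
        vecMulVec g (S.mulVec (Uᵀ.mulVec h)) - vecMulVec h (Sᵀ.mulVec (Uᵀ.mulVec g))) i j * V i j) := by
  set ht := S.mulVec (Uᵀ.mulVec h) with hht
  set Ct := Sᵀ.mulVec (Uᵀ.mulVec g) with hCt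
  set T' := Matrix.hadamard (Vᵀ*U + Uᵀ*V) Bm with hT'
  have hCt' : Ct = Matrix.vecMul g (U * S) := by
    rw [hCt, Matrix.mulVec_mulVec, ← Matrix.transpose_mul, Matrix.mulVec_transpose]
  have base : ∀ (z : Fin m → ℝ), ∑ i, ∑ j, g i * (U i j * z j) = g ⬝ᵥ U.mulVec z := by
    intro z
    simp only [dotProduct, Matrix.mulVec, dotProduct, Finset.mul_sum]
  -- claim 2
  have claim2 : ∑ i, ∑ j, g i * (U i j * (S.mulVec (Vᵀ.mulVec h)) j)
      = ∑ i, ∑ j, vecMulVec h Ct i j * V i j := by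
    have l1 : ∑ i, ∑ j, g i * (U i j * (S.mulVec (Vᵀ.mulVec h)) j)
        = g ⬝ᵥ (U * S * Vᵀ).mulVec h := by
      rw [base, Matrix.mulVec_mulVec, Matrix.mulVec_mulVec, Matrix.mul_assoc]
    have l2 : ∑ i, ∑ j, vecMulVec h Ct i j * V i j = h ⬝ᵥ V.mulVec Ct := by
      simp only [vecMulVec_apply, dotProduct, Matrix.mulVec, Finset.mul_sum]
      exact Finset.sum_congr rfl fun i _ => Finset.sum_congr rfl fun j _ => by ring
    rw [l1, l2, dot_swap g _ h, hCt, Matrix.mulVec_mulVec, Matrix.mulVec_mulVec,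
      Matrix.transpose_mul, Matrix.transpose_mul, Matrix.transpose_transpose, Matrix.mul_assoc]
  -- claim 1
  have claim1 : ∑ i, ∑ j, g i * (U i j * ((S * T' * S).mulVec (Uᵀ.mulVec h)) j)
      = ∑ k, ∑ l, (U * (Matrix.hadamard (vecMulVec ht Ct) Bmᵀ +
          Matrix.hadamard (vecMulVec Ct ht) Bm)) k l * V k l := by
    have l1 : ∑ i, ∑ j, g i * (U i j * ((S * T' * S).mulVec (Uᵀ.mulVec h)) j)
        = g ⬝ᵥ (U * S).mulVec (T'.mulVec ht) := by
      rw [base, hht, Matrix.mulVec_mulVec, Matrix.mulVec_mulVec, Matrix.mulVec_mulVec,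
        Matrix.mulVec_mulVec, Matrix.mulVec_mulVec]
      simp only [← Matrix.mul_assoc]
    rw [l1, Matrix.dotProduct_mulVec, ← hCt', ← core U V Bm ht Ct, hT']
  -- combine
  have expand_rhs : ∑ i, ∑ j, ((U * (Matrix.hadamard (vecMulVec ht Ct) Bmᵀ +
          Matrix.hadamard (vecMulVec Ct ht) Bm) -
        vecMulVec g ht - vecMulVec h Ct) i j * V i j)
      = (∑ k, ∑ l, (U * (Matrix.hadamard (vecMulVec ht Ct) Bmᵀ +
          Matrix.hadamard (vecMulVec Ct ht) Bm)) k l * V k l)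
        - (∑ i, ∑ j, g i * (V i j * ht j))
        - (∑ i, ∑ j, vecMulVec h Ct i j * V i j) := by
    rw [← Finset.sum_sub_distrib, ← Finset.sum_sub_distrib]
    refine Finset.sum_congr rfl fun i _ => ?_
    rw [← Finset.sum_sub_distrib, ← Finset.sum_sub_distrib]
    refine Finset.sum_congr rfl fun j _ => ?_
    simp only [Matrix.sub_apply, vecMulVec_apply]
    ring
  have expand_lhs : (∑ i, g i * (-∑ j, (V i j * ht j +
        U i j * (((-(S * T' * S)).mulVec (Uᵀ.mulVec h) + S.mulVec (Vᵀ.mulVec h)) j))))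
      = (∑ i, ∑ j, g i * (U i j * ((S * T' * S).mulVec (Uᵀ.mulVec h)) j))
        - (∑ i, ∑ j, g i * (V i j * ht j))
        - (∑ i, ∑ j, g i * (U i j * (S.mulVec (Vᵀ.mulVec h)) j)) := by
    rw [← Finset.sum_sub_distrib, ← Finset.sum_sub_distrib]
    refine Finset.sum_congr rfl fun i _ => ?_
    rw [Matrix.neg_mulVec, mul_neg, Finset.mul_sum, ← Finset.sum_neg_distrib,
      ← Finset.sum_sub_distrib, ← Finset.sum_sub_distrib]
    refine Finset.sum_congr rfl fun j _ => ?_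
    simp only [Pi.add_apply, Pi.neg_apply]
    ring
  rw [expand_lhs, expand_rhs, claim1, claim2]

/-- gradient w.r.t. the parameter matrix `U` (holding `h` fixed).  The
gradient of `U ↦ L((I - U T(U)⁻¹ Uᵀ)h)` equals
`U[(h̃ C̃ᵀ) ∘ Bᵀ + (C̃ h̃ᵀ) ∘ B] - (∂L/∂C) h̃ᵀ - h C̃ᵀ`, stated via the directional
derivative in an arbitrary direction `V`. -/
theorem gradient_parameters {n m : ℕ} (hm : m ≤ n - 1)
    (U : Matrix (Fin n) (Fin m) ℝ)
    (hstruct : ∀ j : Fin m, (fun i => U i j) ≠ 0 ∧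
      ∀ i : Fin n, (i : ℕ) < (j : ℕ) → U i j = 0)
    (hT : IsUnit (wyT (U.transpose * U)))
    (L : EuclideanSpace ℝ (Fin n) → ℝ) (hL : Differentiable ℝ L)
    (h : EuclideanSpace ℝ (Fin n)) (V : Matrix (Fin n) (Fin m) ℝ) :
    let T := wyT (U.transpose * U)
    let C : EuclideanSpace ℝ (Fin n) :=
      WithLp.toLp 2 (((1 : Matrix (Fin n) (Fin n) ℝ) - U * T⁻¹ * U.transpose).mulVec h)
    let g := gradient L C
    let htilde := T⁻¹.mulVec (U.transpose.mulVec h)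
    let Ctilde := (T.transpose)⁻¹.mulVec (U.transpose.mulVec g)
    let G := U * (Matrix.hadamard (vecMulVec htilde Ctilde) (wyB m).transpose +
        Matrix.hadamard (vecMulVec Ctilde htilde) (wyB m)) -
      vecMulVec g htilde - vecMulVec h Ctilde
    HasDerivAt (fun t : ℝ =>
        L (WithLp.toLp 2 (((1 : Matrix (Fin n) (Fin n) ℝ) -
            (U + t • V) * (wyT ((U + t • V).transpose * (U + t • V)))⁻¹ *
              (U + t • V).transpose).mulVec h)))
      (∑ i, ∑ j, G i j * V i j) 0 := by
  intro T C g htilde Ctilde G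
  have hTdef : T = wyT (U.transpose * U) := rfl
  have hCdef : C = WithLp.toLp 2 (((1 : Matrix (Fin n) (Fin n) ℝ) - U * T⁻¹ * U.transpose).mulVec h) := rfl
  have hgdef : g = gradient L C := rfl
  have hhtdef : htilde = T⁻¹.mulVec (U.transpose.mulVec h) := rfl
  have hCtdef : Ctilde = (T.transpose)⁻¹.mulVec (U.transpose.mulVec g) := rfl
  have hGdef : G = U * (Matrix.hadamard (vecMulVec htilde Ctilde) (wyB m).transpose +
        Matrix.hadamard (vecMulVec Ctilde htilde) (wyB m)) -
      vecMulVec g htilde - vecMulVec h Ctilde := rfl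
  set Tf : ℝ → Matrix (Fin m) (Fin m) ℝ :=
    fun t => wyT ((U + t • V).transpose * (U + t • V)) with hTf
  set T' : Matrix (Fin m) (Fin m) ℝ := wyT (Vᵀ * U + Uᵀ * V) with hT'def
  have hTf0 : Tf 0 = T := by simp [hTf, hTdef]
  -- entrywise derivative of the quadratic part
  have base : ∀ (i j : Fin m), HasDerivAt
      (fun t : ℝ => ((U + t • V)ᵀ * (U + t • V)) i j) ((Vᵀ * U + Uᵀ * V) i j) 0 := by
    intro i j
    have key : ∀ k ∈ Finset.univ, HasDerivAt
        (fun t : ℝ => (U k i + t * V k i) * (U k j + t * V k j))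
        (V k i * U k j + U k i * V k j) (0:ℝ) := by
      intro k _
      have h1 : HasDerivAt (fun t : ℝ => U k i + t * V k i) (V k i) 0 := by
        simpa using ((hasDerivAt_id (0:ℝ)).mul_const (V k i)).const_add (U k i)
      have h2 : HasDerivAt (fun t : ℝ => U k j + t * V k j) (V k j) 0 := by
        simpa using ((hasDerivAt_id (0:ℝ)).mul_const (V k j)).const_add (U k j)
      simpa [Pi.mul_def] using h1.mul h2
    have := HasDerivAt.fun_sum key
    have heq : (fun t : ℝ => ((U + t • V)ᵀ * (U + t • V)) i j)
        = fun t : ℝ => ∑ k, (U k i + t * V k i) * (U k j + t * V k j) := by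
      funext t
      simp [Matrix.mul_apply, Matrix.transpose_apply, Matrix.add_apply, Matrix.smul_apply,
        smul_eq_mul]
    rw [heq]
    refine this.congr_deriv (Eq.symm ?_)
    rw [Matrix.add_apply, Matrix.mul_apply, Matrix.mul_apply, ← Finset.sum_add_distrib]
    simp [Matrix.transpose_apply]
  have hTder : HasDerivAt Tf T' 0 := by
    apply hasDerivAt_matrix
    intro i j
    by_cases h1 : (i : ℕ) < (j : ℕ)
    · simp only [hTf, hT'def, wyT, Matrix.of_apply, if_pos h1]
      exact base i j
    · by_cases h2 : i = j
      · subst h2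
        simp only [hTf, hT'def, wyT, Matrix.of_apply, if_neg h1, if_pos rfl]
        exact (base i i).div_const 2
      · simp only [hTf, hT'def, wyT, Matrix.of_apply, if_neg h1, if_neg h2]
        exact hasDerivAt_const _ _
  -- derivative of the inverse
  have hTinv : HasDerivAt (fun t => (Tf t)⁻¹) (-(T⁻¹ * T' * T⁻¹)) 0 := by
    have hu : (hT.unit : Matrix (Fin m) (Fin m) ℝ) = T := hT.unit_spec
    have hfd : HasFDerivAt Ring.inverse
        (-(ContinuousLinearMap.mulLeftRight ℝ (Matrix (Fin m) (Fin m) ℝ) ↑hT.unit⁻¹) ↑hT.unit⁻¹)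
        (Tf 0) := by
      rw [hTf0]
      have := hasFDerivAt_ringInverse (𝕜 := ℝ) hT.unit
      rwa [hu] at this
    have hcomp := hfd.comp_hasDerivAt 0 hTder
    have heq : (fun t => (Tf t)⁻¹) = fun t => Ring.inverse (Tf t) := by
      funext t; exact Matrix.nonsing_inv_eq_ringInverse _
    rw [heq]
    refine hcomp.congr_deriv (Eq.symm ?_)
    simp [ContinuousLinearMap.mulLeftRight_apply, Matrix.coe_units_inv, hu, Matrix.mul_assoc]
    rfl
  -- further derivatives
  set y : ℝ → (Fin m → ℝ) :=
    fun t => ((Tf t)⁻¹).mulVec ((U + t • V)ᵀ.mulVec h) with hy_def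
  set y' : Fin m → ℝ :=
    (-(T⁻¹ * T' * T⁻¹)).mulVec (Uᵀ.mulVec h) + T⁻¹.mulVec (Vᵀ.mulVec h) with hy'_def
  have hy0 : y 0 = T⁻¹.mulVec (Uᵀ.mulVec h) := by
    simp [hy_def, hTf0]
  have hlin : ∀ (c : Fin m) (w : Fin n → ℝ), HasDerivAt
      (fun t : ℝ => ((U + t • V)ᵀ.mulVec w) c) ((Vᵀ.mulVec w) c) 0 := by
    intro c w
    have key : ∀ k ∈ Finset.univ, HasDerivAt
        (fun t : ℝ => (U k c + t * V k c) * w k) (V k c * w k) (0:ℝ) := by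
      intro k _
      have h1 : HasDerivAt (fun t : ℝ => U k c + t * V k c) (V k c) 0 := by
        simpa using ((hasDerivAt_id (0:ℝ)).mul_const (V k c)).const_add (U k c)
      simpa using h1.mul_const (w k)
    have := HasDerivAt.fun_sum key
    have heq : (fun t : ℝ => ((U + t • V)ᵀ.mulVec w) c)
        = fun t : ℝ => ∑ k, (U k c + t * V k c) * w k := by
      funext t
      simp [Matrix.mulVec, dotProduct, Matrix.transpose_apply, Matrix.add_apply,
        Matrix.smul_apply, smul_eq_mul]
    rw [heq]
    refine this.congr_deriv (Eq.symm ?_)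
    rfl
  have hy : ∀ j, HasDerivAt (fun t => y t j) (y' j) 0 := by
    intro j
    have key : ∀ c ∈ Finset.univ, HasDerivAt
        (fun t : ℝ => (Tf t)⁻¹ j c * ((U + t • V)ᵀ.mulVec h) c)
        ((-(T⁻¹ * T' * T⁻¹)) j c * (Uᵀ.mulVec h) c + T⁻¹ j c * (Vᵀ.mulVec h) c) (0:ℝ) := by
      intro c _
      have h1 := hTinv.matrix_entry j c
      have h2 := hlin c h
      simpa [hTf0, Pi.mul_def] using h1.mul h2
    have := HasDerivAt.fun_sum key
    have heq : (fun t => y t j)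
        = fun t : ℝ => ∑ c, (Tf t)⁻¹ j c * ((U + t • V)ᵀ.mulVec h) c := rfl
    rw [heq]
    refine this.congr_deriv (Eq.symm ?_)
    rw [Finset.sum_add_distrib]
    rfl
  -- the curve
  set φ : ℝ → EuclideanSpace ℝ (Fin n) := fun t =>
    WithLp.toLp 2 (((1 : Matrix (Fin n) (Fin n) ℝ) -
      (U + t • V) * (wyT ((U + t • V).transpose * (U + t • V)))⁻¹ *
        (U + t • V).transpose).mulVec h) with hφ_def
  set φ' : EuclideanSpace ℝ (Fin n) :=
    WithLp.toLp 2 (fun i => -∑ j, (V i j * (T⁻¹.mulVec (Uᵀ.mulVec h)) j + U i j * y' j))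
      with hφ'_def
  have hφder : HasDerivAt φ φ' 0 := by
    apply hasDerivAt_euclidean
    intro i
    have heq : (fun t => φ t i) = fun t : ℝ => h i - ∑ j, (U i j + t * V i j) * y t j := by
      funext t
      show (WithLp.toLp 2 (((1 : Matrix (Fin n) (Fin n) ℝ) -
        (U + t • V) * (wyT ((U + t • V).transpose * (U + t • V)))⁻¹ *
          (U + t • V).transpose).mulVec h)).ofLp i = _
      rw [Matrix.sub_mulVec, Matrix.one_mulVec, ← Matrix.mulVec_mulVec, ← Matrix.mulVec_mulVec]
      rfl
    rw [heq]
    have key : ∀ j ∈ Finset.univ, HasDerivAt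
        (fun t : ℝ => (U i j + t * V i j) * y t j)
        (V i j * (T⁻¹.mulVec (Uᵀ.mulVec h)) j + U i j * y' j) (0:ℝ) := by
      intro j _
      have h1 : HasDerivAt (fun t : ℝ => U i j + t * V i j) (V i j) 0 := by
        simpa using ((hasDerivAt_id (0:ℝ)).mul_const (V i j)).const_add (U i j)
      have := h1.mul (hy j)
      simpa [hy0, Pi.mul_def] using this
    exact (HasDerivAt.fun_sum key).const_sub (h i)
  -- composition with L
  have hC0 : φ 0 = C := by
    rw [hCdef]
    simp only [hφ_def, zero_smul, add_zero, ← hTdef]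
  have hgrad : HasGradientAt L g C := (hL C).hasGradientAt
  have hfd := hgrad.hasFDerivAt
  rw [← hC0] at hfd
  have hcomp := hfd.comp_hasDerivAt 0 hφder
  have hT'h : T' = Matrix.hadamard (Vᵀ * U + Uᵀ * V) (wyB m) := by
    rw [hT'def, wyT_eq_hadamard]
  have hy'2 : y' = (-(T⁻¹ * Matrix.hadamard (Vᵀ * U + Uᵀ * V) (wyB m) * T⁻¹)).mulVec (Uᵀ.mulVec h)
      + T⁻¹.mulVec (Vᵀ.mulVec h) := by rw [hy'_def, hT'h]
  have hφ'2 : φ' = WithLp.toLp 2 (fun i => -∑ j, (V i j * (T⁻¹.mulVec (Uᵀ.mulVec h)) j +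
      U i j * (((-(T⁻¹ * Matrix.hadamard (Vᵀ * U + Uᵀ * V) (wyB m) * T⁻¹)).mulVec (Uᵀ.mulVec h)
        + T⁻¹.mulVec (Vᵀ.mulVec h)) j))) := by
    rw [hφ'_def, hy'2]
  have hval : ∑ i, g i * φ' i = ∑ i, ∑ j, G i j * V i j := by
    rw [hGdef, hhtdef, hCtdef, ← Matrix.transpose_nonsing_inv]
    simp only [hφ'2, WithLp.ofLp_toLp]
    exact keyalg U V T⁻¹ (wyB m) g h
  have hval2 : (InnerProductSpace.toDual ℝ (EuclideanSpace ℝ (Fin n)) g) φ' =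
      ∑ i, ∑ j, G i j * V i j := by
    rw [InnerProductSpace.toDual_apply_apply, ← hval]
    simp [PiLp.inner_apply, RCLike.inner_apply, starRingEnd_apply]
    exact Finset.sum_congr rfl fun _ _ => mul_comm _ _
  rw [← hval2]
  exact hcomp
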